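/- Assume the game admits a Nash equilibrium δ*. Then the optimal value of the penalized formulation (R) is zero: there exists a feasible solution (δ, v, ϖ) of (R) with ϖ = 0, and every feasible solution of (R) has objective ϖ ≥ 0. -/
import Mathlib


open Finset

variable {N : Type*} [Fintype N] [DecidableEq N] [Nonempty N]
variable {A : N → Type*} [∀ i, Fintype (A i)] [∀ i, DecidableEq (A i)]
variable [∀ i, Nonempty (A i)]

/-- `δ` is a mixed strategy profile: each `δ i` is nonnegative and sums to 1. -/
def IsMixedProfile {N : Type*} {A : N → Type*} [∀ i, Fintype (A i)]
    (δ : ∀ i, A i → ℝ) : Prop :=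
  (∀ i a, 0 ≤ δ i a) ∧ ∀ i, ∑ a, δ i a = 1

/-- Expected utility of player `i` under mixed strategy profile `δ`. -/
def expUtil {N : Type*} [Fintype N] [DecidableEq N] {A : N → Type*}
    [∀ i, Fintype (A i)] (u : N → (∀ j, A j) → ℝ) (δ : ∀ i, A i → ℝ) (i : N) : ℝ :=
  ∑ a : ∀ j, A j, (∏ j, δ j (a j)) * u i a

/-- The point-mass (pure) strategy on action `ai`. -/
def pureStrat {N : Type*} {A : N → Type*} [∀ i, DecidableEq (A i)]
    (i : N) (ai : A i) : A i → ℝ := fun b => if b = ai then 1 else 0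

/-- `u_i(a_i, δ_{-i})`: expected utility of player `i` when playing the pure
action `ai` against the opponents' profile `δ_{-i}`. -/
def devUtil {N : Type*} [Fintype N] [DecidableEq N] {A : N → Type*}
    [∀ i, Fintype (A i)] [∀ i, DecidableEq (A i)]
    (u : N → (∀ j, A j) → ℝ) (δ : ∀ i, A i → ℝ) (i : N) (ai : A i) : ℝ :=
  expUtil u (Function.update δ i (pureStrat i ai)) i

/-- Minimum of `u i` over pure action profiles. -/
noncomputable def minU {N : Type*} [Fintype N] [DecidableEq N] {A : N → Type*}
    [∀ i, Fintype (A i)] [∀ i, Nonempty (A i)]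
    (u : N → (∀ j, A j) → ℝ) (i : N) : ℝ :=
  Finset.univ.inf' Finset.univ_nonempty (u i)

/-- Maximum of `u i` over pure action profiles. -/
noncomputable def maxU {N : Type*} [Fintype N] [DecidableEq N] {A : N → Type*}
    [∀ i, Fintype (A i)] [∀ i, Nonempty (A i)]
    (u : N → (∀ j, A j) → ℝ) (i : N) : ℝ :=
  Finset.univ.sup' Finset.univ_nonempty (u i)

/-- `δ` is a Nash equilibrium. -/
def IsNashEq {N : Type*} [Fintype N] [DecidableEq N] {A : N → Type*}
    [∀ i, Fintype (A i)] (u : N → (∀ j, A j) → ℝ) (δ : ∀ i, A i → ℝ) : Prop :=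
  IsMixedProfile δ ∧ ∀ (i : N) (δ' : A i → ℝ), (∀ a, 0 ≤ δ' a) → (∑ a, δ' a = 1) →
    expUtil u (Function.update δ i δ') i ≤ expUtil u δ i

/-- `δ` is an ε-Nash equilibrium. -/
def IsEpsNashEq {N : Type*} [Fintype N] [DecidableEq N] {A : N → Type*}
    [∀ i, Fintype (A i)] (u : N → (∀ j, A j) → ℝ) (δ : ∀ i, A i → ℝ) (ε : ℝ) : Prop :=
  IsMixedProfile δ ∧ ∀ (i : N) (δ' : A i → ℝ), (∀ a, 0 ≤ δ' a) → (∑ a, δ' a = 1) →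
    expUtil u (Function.update δ i δ') i ≤ expUtil u δ i + ε

/-- Feasibility for the mixed-integer formulation (P). -/
def FeasP {N : Type*} [Fintype N] [DecidableEq N] {A : N → Type*}
    [∀ i, Fintype (A i)] [∀ i, DecidableEq (A i)] [∀ i, Nonempty (A i)]
    (u : N → (∀ j, A j) → ℝ) (δ : ∀ i, A i → ℝ) (v : N → ℝ)
    (z s : ∀ i, A i → ℝ) : Prop :=
  IsMixedProfile δ ∧ ∀ (i : N) (ai : A i),
    v i = s i ai + devUtil u δ i ai ∧
    δ i ai ≤ z i ai ∧
    s i ai ≤ (1 - z i ai) * (maxU u i - minU u i) ∧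
    0 ≤ s i ai ∧ s i ai ≤ maxU u i - minU u i ∧
    minU u i ≤ v i ∧ v i ≤ maxU u i ∧
    (z i ai = 0 ∨ z i ai = 1)

/-- Feasibility for the continuous formulation (Q). -/
def FeasQ {N : Type*} [Fintype N] [DecidableEq N] {A : N → Type*}
    [∀ i, Fintype (A i)] [∀ i, DecidableEq (A i)] [∀ i, Nonempty (A i)]
    (u : N → (∀ j, A j) → ℝ) (δ : ∀ i, A i → ℝ) (v : N → ℝ) : Prop :=
  IsMixedProfile δ ∧ ∀ (i : N) (ai : A i),
    0 ≤ v i - devUtil u δ i ai ∧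
    δ i ai * (v i - devUtil u δ i ai) = 0 ∧
    minU u i ≤ v i ∧ v i ≤ maxU u i

/-- Feasibility for the penalized formulation (R). -/
def FeasR {N : Type*} [Fintype N] [DecidableEq N] {A : N → Type*}
    [∀ i, Fintype (A i)] [∀ i, DecidableEq (A i)] [∀ i, Nonempty (A i)]
    (u : N → (∀ j, A j) → ℝ) (δ : ∀ i, A i → ℝ) (v : N → ℝ) (ϖ : ℝ) : Prop :=
  IsMixedProfile δ ∧ ∀ (i : N) (ai : A i),
    δ i ai * (v i - devUtil u δ i ai) ≤ ϖ ∧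
    -(δ i ai * (v i - devUtil u δ i ai)) ≤ ϖ ∧
    0 ≤ v i - devUtil u δ i ai ∧
    minU u i ≤ v i ∧ v i ≤ maxU u i

lemma expUtil_eq_sum_dev (u : N → (∀ j, A j) → ℝ) (δ : ∀ i, A i → ℝ) (i : N) :
    expUtil u δ i = ∑ ai, δ i ai * devUtil u δ i ai := by
  have key : ∀ (f : A i → ℝ) (a : ∀ j, A j),
      ∏ j, Function.update δ i f j (a j) = f (a i) * ∏ j ∈ univ.erase i, δ j (a j) := by
    intro f a
    rw [← Finset.mul_prod_erase univ _ (mem_univ i), Function.update_self]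
    congr 1
    exact Finset.prod_congr rfl fun j hj => by
      rw [Function.update_of_ne (Finset.ne_of_mem_erase hj)]
  unfold devUtil expUtil pureStrat
  simp only [key, mul_sum, ite_mul, one_mul, zero_mul]
  rw [Finset.sum_comm]
  refine Finset.sum_congr rfl fun a _ => ?_
  rw [← Finset.mul_prod_erase univ (fun j => δ j (a j)) (mem_univ i)]
  simp only [mul_ite, mul_zero]
  rw [Finset.sum_ite_eq univ (a i)]
  simp [mul_assoc]

lemma minU_le_expUtil (u : N → (∀ j, A j) → ℝ) (δ : ∀ i, A i → ℝ)
    (hδ : IsMixedProfile δ) (i : N) :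
    minU u i ≤ expUtil u δ i ∧ expUtil u δ i ≤ maxU u i := by
  obtain ⟨hpos, hsum⟩ := hδ
  have hw : ∀ a : ∀ j, A j, (0:ℝ) ≤ ∏ j, δ j (a j) :=
    fun a => Finset.prod_nonneg fun j _ => hpos j (a j)
  have hws : ∑ a : ∀ j, A j, ∏ j, δ j (a j) = 1 := by
    rw [← Fintype.piFinset_univ, ← Finset.prod_univ_sum]
    simp [hsum]
  constructor
  · calc minU u i = ∑ a : ∀ j, A j, (∏ j, δ j (a j)) * minU u i := by
          rw [← Finset.sum_mul, hws, one_mul]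
      _ ≤ expUtil u δ i := by
          refine Finset.sum_le_sum fun a _ => ?_
          exact mul_le_mul_of_nonneg_left (Finset.inf'_le _ (mem_univ a)) (hw a)
  · calc expUtil u δ i ≤ ∑ a : ∀ j, A j, (∏ j, δ j (a j)) * maxU u i := by
          refine Finset.sum_le_sum fun a _ => ?_
          exact mul_le_mul_of_nonneg_left (Finset.le_sup' _ (mem_univ a)) (hw a)
      _ = maxU u i := by rw [← Finset.sum_mul, hws, one_mul]

lemma devUtil_le_of_nash (u : N → (∀ j, A j) → ℝ) (δ : ∀ i, A i → ℝ)
    (h : IsNashEq u δ) (i : N) (ai : A i) : devUtil u δ i ai ≤ expUtil u δ i := by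
  refine h.2 i (pureStrat i ai) (fun a => by unfold pureStrat; positivity) ?_
  simp [pureStrat]

/-- If the game has a Nash equilibrium, then the optimal value of (R) is zero:
some feasible point attains objective `0`, and every feasible point has
objective `≥ 0`. -/
theorem feasR_optimal_value_zero (u : N → (∀ j, A j) → ℝ)
    (hNE : ∃ δstar : ∀ i, A i → ℝ, IsNashEq u δstar) :
    (∃ (δ : ∀ i, A i → ℝ) (v : N → ℝ), FeasR u δ v 0) ∧
    ∀ (δ : ∀ i, A i → ℝ) (v : N → ℝ) (ϖ : ℝ), FeasR u δ v ϖ → 0 ≤ ϖ := by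
  constructor
  · obtain ⟨δ, hδ⟩ := hNE
    refine ⟨δ, fun i => expUtil u δ i, hδ.1, fun i ai => ?_⟩
    have hdev : ∀ bi, devUtil u δ i bi ≤ expUtil u δ i :=
      devUtil_le_of_nash u δ hδ i
    have hcomp : δ i ai * (expUtil u δ i - devUtil u δ i ai) = 0 := by
      have hsum0 : ∑ bi, δ i bi * (expUtil u δ i - devUtil u δ i bi) = 0 := by
        simp only [mul_sub, Finset.sum_sub_distrib, ← Finset.sum_mul, hδ.1.2 i,
          one_mul, ← expUtil_eq_sum_dev, sub_self]
      have := (Finset.sum_eq_zero_iff_of_nonneg (fun bi _ =>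
        mul_nonneg (hδ.1.1 i bi) (sub_nonneg.2 (hdev bi)))).1 hsum0 ai (mem_univ ai)
      exact this
    obtain ⟨hmin, hmax⟩ := minU_le_expUtil u δ hδ.1 i
    exact ⟨le_of_eq hcomp, by rw [hcomp]; simp, sub_nonneg.2 (hdev ai), hmin, hmax⟩
  · rintro δ v ϖ ⟨hmix, hc⟩
    obtain ⟨i⟩ := ‹Nonempty N›
    obtain ⟨ai⟩ := ‹∀ i, Nonempty (A i)› i
    obtain ⟨h1, h2, -⟩ := hc i ai
    linarith
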